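/- Let 𝓗 be a connected hypergraph on H equipped with a total order on H. Then the flip rewriting on constructions of 𝓗 is terminating: there is no infinite sequence S₀ → S₁ → S₂ → ⋯ of flips of constructions of 𝓗. -/

import Mathlib

open scoped Classical

noncomputable section

/-! ## HGraphs (nestohedra combinatorics), after Curien–Laplante-Anfossi:
hypergraphs, restrictions, connectivity, saturation, reconnected restriction,
constructs/constructions, the face order, the flip rewriting, and terms over the
associated signatures. -/

/-- A hypergraph on a finite vertex set: a finite set of nonempty hyperedges whose union is
the vertex set, assumed atomic (every singleton is a hyperedge). -/
structure HGraph (α : Type*) [DecidableEq α] where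
  verts : Finset α
  edges : Finset (Finset α)
  edges_nonempty : ∀ e ∈ edges, e.Nonempty
  edges_subset : ∀ e ∈ edges, e ⊆ verts
  atomic : ∀ v ∈ verts, {v} ∈ edges

namespace HGraph

variable {α : Type*} [DecidableEq α]

/-- The plain restriction `𝓗_X` of a hypergraph to a subset `X` of its vertices. -/
def restrict (H : HGraph α) (X : Finset α) : HGraph α where
  verts := X ∩ H.verts
  edges := H.edges.filter (· ⊆ X)
  edges_nonempty e he := H.edges_nonempty e (Finset.mem_filter.mp he).1
  edges_subset e he :=
    Finset.subset_inter (Finset.mem_filter.mp he).2 (H.edges_subset e (Finset.mem_filter.mp he).1)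
  atomic v hv := by
    rcases Finset.mem_inter.mp hv with ⟨h1, h2⟩
    exact Finset.mem_filter.mpr ⟨H.atomic v h2, Finset.singleton_subset_iff.mpr h1⟩

/-- A hypergraph is connected if its vertex set is nonempty and admits no nontrivial
partition `X₁ ∪ X₂` such that every edge lies in `X₁` or in `X₂`. -/
def Connected (H : HGraph α) : Prop :=
  H.verts.Nonempty ∧ ∀ X₁ X₂ : Finset α, X₁.Nonempty → X₂.Nonempty →
    Disjoint X₁ X₂ → X₁ ∪ X₂ = H.verts → ∃ e ∈ H.edges, ¬e ⊆ X₁ ∧ ¬e ⊆ X₂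

/-- `C` is (the vertex set of) a connected component of `H`: a maximal connected subset. -/
def IsComponent (H : HGraph α) (C : Finset α) : Prop :=
  C ⊆ H.verts ∧ (H.restrict C).Connected ∧
    ∀ D : Finset α, C ⊆ D → D ⊆ H.verts → (H.restrict D).Connected → D = C

/-- `y` and `z` lie in the same connected component of `H`. -/
def SameComponent (H : HGraph α) (y z : α) : Prop :=
  ∃ C : Finset α, H.IsComponent C ∧ y ∈ C ∧ z ∈ C

/-- The saturation `Sat(𝓗)`: the set of (nonempty) connected subsets of vertices. -/
def sat (H : HGraph α) : Finset (Finset α) :=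
  H.verts.powerset.filter fun X => (H.restrict X).Connected

theorem singleton_connected (H : HGraph α) {v : α} (hv : v ∈ H.verts) :
    (H.restrict {v}).Connected := by
  constructor
  · exact ⟨v, Finset.mem_inter.mpr ⟨Finset.mem_singleton_self v, hv⟩⟩
  · intro X₁ X₂ h₁ h₂ hd hu
    exfalso
    have hv' : ({v} : Finset α) ∩ H.verts = {v} :=
      Finset.inter_eq_left.mpr (Finset.singleton_subset_iff.mpr hv)
    have hu' : X₁ ∪ X₂ = ({v} : Finset α) := hu.trans hv'
    have hX₁ : X₁ ⊆ {v} := hu' ▸ Finset.subset_union_left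
    have hX₂ : X₂ ⊆ {v} := hu' ▸ Finset.subset_union_right
    obtain ⟨a, ha⟩ := h₁
    obtain ⟨b, hb⟩ := h₂
    have ha' := Finset.mem_singleton.mp (hX₁ ha)
    have hb' := Finset.mem_singleton.mp (hX₂ hb)
    subst ha'; exact Finset.disjoint_left.mp hd ha (hb' ▸ hb)

/-- The reconnected restriction `𝓗 ↾ X` of `𝓗` to `X`. -/
def reconRestrict (H : HGraph α) (X : Finset α) : HGraph α where
  verts := X ∩ H.verts
  edges := (H.sat.image (· ∩ X)).filter (·.Nonempty)
  edges_nonempty e he := (Finset.mem_filter.mp he).2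
  edges_subset := by
    intro e he
    rcases Finset.mem_image.mp (Finset.mem_filter.mp he).1 with ⟨Z, hZ, rfl⟩
    have hZv : Z ⊆ H.verts := Finset.mem_powerset.mp (Finset.mem_filter.mp hZ).1
    exact fun a ha => Finset.mem_inter.mpr
      ⟨(Finset.mem_inter.mp ha).2, hZv (Finset.mem_inter.mp ha).1⟩
  atomic := by
    intro v hv
    rcases Finset.mem_inter.mp hv with ⟨h1, h2⟩
    refine Finset.mem_filter.mpr ⟨Finset.mem_image.mpr ⟨{v}, ?_, ?_⟩, ?_⟩
    · exact Finset.mem_filter.mpr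
        ⟨Finset.mem_powerset.mpr (Finset.singleton_subset_iff.mpr h2),
         H.singleton_connected h2⟩
    · exact Finset.inter_eq_left.mpr (Finset.singleton_subset_iff.mpr h1)
    · exact ⟨v, by simp [Finset.inter_eq_left.mpr (Finset.singleton_subset_iff.mpr h1)]⟩

/-- `x ⇝ {y,z}` in `𝓗`: after removing `x`, the vertices `y` and `z` lie in the same
connected component.  Its negation is "`x` disconnects `y` and `z` in `𝓗`". -/
def Links (H : HGraph α) (x y z : α) : Prop :=
  (H.restrict (H.verts \ {x})).SameComponent y z

/-- A hypergraph is contextual if for every connected subset `Y` of cardinality at least 3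
and all distinct `x, y, z ∈ Y`, `x` disconnects `y` and `z` in `𝓗_Y` iff it does in `𝓗`. -/
def Contextual (H : HGraph α) : Prop :=
  ∀ Y : Finset α, Y ⊆ H.verts → (H.restrict Y).Connected → 3 ≤ Y.card →
    ∀ x y z : α, x ∈ Y → y ∈ Y → z ∈ Y → x ≠ y → y ≠ z → x ≠ z →
      ((H.restrict Y).Links x y z ↔ H.Links x y z)

end HGraph

/-- Finite rooted trees with nodes decorated by finite sets (potential constructs). -/
inductive FTree (α : Type*) : Type _ where
  | node : Finset α → List (FTree α) → FTree α

namespace FTree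

variable {α : Type*} [DecidableEq α]

/-- The decoration of the root node. -/
def label : FTree α → Finset α
  | node Y _ => Y

/-- The list of children of the root node. -/
def children : FTree α → List (FTree α)
  | node _ ts => ts

/-- The support of a tree: the union of the decorations of its nodes. -/
def support : FTree α → Finset α
  | node Y [] => Y
  | node Y (t :: ts) => support t ∪ support (node Y ts)

/-- The list of decorations of the nodes of a tree. -/
def labels : FTree α → List (Finset α)
  | node Y [] => [Y]
  | node Y (t :: ts) => labels t ++ labels (node Y ts)

/-- The dimension of a construct: the sum over its nodes `X` of `|X| - 1`. -/
def dim (T : FTree α) : ℕ := (T.labels.map fun X => X.card - 1).sum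

mutual
  /-- The (full) subtree rooted at the node decorated by `X`, if any. -/
  def subtreeAt : FTree α → Finset α → Option (FTree α)
    | node Y ts, X => if Y = X then some (node Y ts) else subtreeAtList ts X
  def subtreeAtList : List (FTree α) → Finset α → Option (FTree α)
    | [], _ => none
    | t :: ts, X => (subtreeAt t X).elim (subtreeAtList ts X) some
end

/-- The support `supp (T ↾ X)` of the subtree rooted at the node decorated by `X`
(or `∅` if there is no such node). -/
def suppAt (T : FTree α) (X : Finset α) : Finset α :=
  ((T.subtreeAt X).map support).getD ∅

mutual
  /-- The list of supports of the subtrees rooted at the nodes of `T` (its nested set). -/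
  def nests : FTree α → List (Finset α)
    | node Y ts => support (node Y ts) :: nestsList ts
  def nestsList : List (FTree α) → List (Finset α)
    | [] => []
    | t :: ts => nests t ++ nestsList ts
end

/-- The nested set of a tree, as a finite set. -/
def nestSet (T : FTree α) : Finset (Finset α) := T.nests.toFinset

/-- `S ≺ T` (`S` is covered by `T`) in the face order: `T` is obtained from `S` by
contracting one edge between a node and its father (equivalently, the nested set of `T`
is obtained from that of `S` by removing one non-root element). -/
def CoveredBy (S T : FTree α) : Prop :=
  ∃ N ∈ S.nests, N ≠ S.support ∧ T.nestSet = S.nestSet.erase N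

/-- The face (subface) order `S ≼ T` on constructs: the reflexive–transitive closure of
the covering relation `≺`. -/
def FaceLe (S T : FTree α) : Prop := Relation.ReflTransGen CoveredBy S T

/-- `IsSubtree S T`: `S` is a (full) subtree of `T`. -/
inductive IsSubtree : FTree α → FTree α → Prop
  | refl (t : FTree α) : IsSubtree t t
  | child {s t u : FTree α} : IsSubtree s t → t ∈ u.children → IsSubtree s u

/-- In `T`, the node decorated by `X` has a child decorated by `Y`. -/
def ParentChild (X Y : Finset α) (T : FTree α) : Prop :=
  ∃ R : FTree α, IsSubtree R T ∧ R.label = X ∧ ∃ t ∈ R.children, t.label = Y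

mutual
  /-- Pruning: remove all (subtrees rooted at) nodes whose decoration is not a subset
  of `X`, keeping the root. -/
  def prune (X : Finset α) : FTree α → FTree α
    | node Y ts => node Y (pruneList X ts)
  def pruneList (X : Finset α) : List (FTree α) → List (FTree α)
    | [] => []
    | t :: ts => if t.label ⊆ X then prune X t :: pruneList X ts else pruneList X ts
end

end FTree

/-- `IsConstruct H T`: the tree `T` is a construct of the hypergraph `H`: its root `Y` is a
nonempty subset of the vertices, its children are constructs of the connected components of
`𝓗 ∖ Y` (one for each component, listed by increasing maximal vertex). -/
inductive IsConstruct {α : Type*} [LinearOrder α] : HGraph α → FTree α → Prop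
  | node {H : HGraph α} (Y : Finset α) (ts : List (FTree α))
      (hY : Y.Nonempty) (hYsub : Y ⊆ H.verts)
      (hmem : ∀ t ∈ ts, (H.restrict (H.verts \ Y)).IsComponent t.support)
      (hcover : ∀ C : Finset α, (H.restrict (H.verts \ Y)).IsComponent C →
        ∃ t ∈ ts, t.support = C)
      (hsorted : ts.Pairwise fun a b => a.support.max < b.support.max)
      (hchild : ∀ t ∈ ts, IsConstruct (H.restrict t.support) t) :
      IsConstruct H (FTree.node Y ts)

section ConstructionOrder

variable {α : Type*} [LinearOrder α]

/-- A construction: a construct all of whose nodes are singletons (a vertex of the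
nestohedron). -/
def IsConstruction (H : HGraph α) (T : FTree α) : Prop :=
  IsConstruct H T ∧ ∀ X ∈ T.labels, X.card = 1

/-- An `X`-face: a 2-dimensional construct whose unique non-singleton node is decorated
by `X`, of cardinality 3. -/
def IsXFace (H : HGraph α) (X : Finset α) (T : FTree α) : Prop :=
  IsConstruct H T ∧ X.card = 3 ∧ X ∈ T.labels ∧ ∀ Y ∈ T.labels, Y ≠ X → Y.card = 1

/-- Two distinct constructions are joined by an edge of the nestohedron: both are covered
by a common 1-dimensional construct. -/
def EdgeJoined (H : HGraph α) (S T : FTree α) : Prop :=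
  IsConstruction H S ∧ IsConstruction H T ∧ S ≠ T ∧
  ∃ V : FTree α, IsConstruct H V ∧ V.dim = 1 ∧ FTree.CoveredBy S V ∧ FTree.CoveredBy T V

/-- The flip rewriting relation `S → T` on constructions of an ordered hypergraph:
`S` and `T` are the two endpoints of an edge whose 1-dimensional face has unique
non-singleton node `{x, y}` with `x < y`, and in `S` the node `{x}` is the parent of the
node `{y}`. -/
def Flip (H : HGraph α) (S T : FTree α) : Prop :=
  IsConstruction H S ∧ IsConstruction H T ∧ S ≠ T ∧
  ∃ (V : FTree α) (x y : α), IsConstruct H V ∧ V.dim = 1 ∧ x ≠ y ∧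
    ({x, y} : Finset α) ∈ V.labels ∧ FTree.CoveredBy S V ∧ FTree.CoveredBy T V ∧
    FTree.ParentChild ({x} : Finset α) ({y} : Finset α) S ∧ x < y

/-- The coordinate vector of a construction `S` of `H`:
`v^S_x = |{e ∈ Sat(𝓗) : x ∈ e ⊆ supp (S ↾ x)}|`. -/
def coordVec (H : HGraph α) (S : FTree α) (x : α) : ℕ :=
  (H.sat.filter fun e => x ∈ e ∧ e ⊆ S.suppAt {x}).card

end ConstructionOrder

/-- Raw terms over the signature `Σ_𝓗` (and `Σ^c_𝓗`): variables are (connected) subsets,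
function symbols are pairs `(X, Y)` of subsets, applied to a list of arguments. -/
inductive HTerm (α : Type*) : Type _ where
  | var : Finset α → HTerm α
  | app : Finset α → Finset α → List (HTerm α) → HTerm α

namespace HTerm

variable {α : Type*} [DecidableEq α]

/-- The (output) sort of a term. -/
def sortOf : HTerm α → Finset α
  | var A => A
  | app _ Y _ => Y

/-- The list of variables occurring in a term. -/
def varsList : HTerm α → List (Finset α)
  | var A => [A]
  | app _ _ [] => []
  | app X Y (t :: ts) => varsList t ++ varsList (app X Y ts)

/-- The list of first components of the function symbols occurring in a term. -/
def appFirsts : HTerm α → List (Finset α)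
  | var _ => []
  | app X _ [] => [X]
  | app X Y (t :: ts) => appFirsts t ++ appFirsts (app X Y ts)

/-- A term is closed if it contains no variables. -/
def Closed (t : HTerm α) : Prop := t.varsList = []

/-- The union `⋃ var(t)` of the variables of a term. -/
def varsUnion (t : HTerm α) : Finset α := t.varsList.foldr (· ∪ ·) ∅

mutual
  /-- Projection of a term to a decorated tree: every function symbol `(X, Y)` is sent to
  its first component `X`, and all variables are pruned. -/
  def toTree : HTerm α → FTree α
    | .var A => .node A []
    | .app X _ ts => .node X (toTreeList ts)
  def toTreeList : List (HTerm α) → List (FTree α)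
    | [] => []
    | .var _ :: ts => toTreeList ts
    | t :: ts => toTree t :: toTreeList ts
end

end HTerm

/-- Well-formed terms over the signature `Σ_𝓗` associated with the hypergraph `H`:
a variable is a connected subset (its own sort); a function symbol `(X, Y)` (with
`∅ ≠ X ⊆ Y ⊆ H` and `Y` connected) is applied to arguments whose sorts are exactly the
connected components of `𝓗_Y ∖ X`, listed by increasing maximal vertex. -/
inductive IsTerm {α : Type*} [LinearOrder α] (H : HGraph α) : HTerm α → Prop
  | var (A : Finset α) : A ⊆ H.verts → (H.restrict A).Connected → IsTerm H (.var A)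
  | app (X Y : Finset α) (ts : List (HTerm α)) :
      X.Nonempty → X ⊆ Y → Y ⊆ H.verts → (H.restrict Y).Connected →
      (∀ t ∈ ts, (H.restrict (Y \ X)).IsComponent t.sortOf) →
      (∀ C : Finset α, (H.restrict (Y \ X)).IsComponent C → ∃ t ∈ ts, t.sortOf = C) →
      ts.Pairwise (fun a b => a.sortOf.max < b.sortOf.max) →
      (∀ t ∈ ts, IsTerm H t) →
      IsTerm H (.app X Y ts)


section Aux
namespace FTree
variable {α : Type*} [DecidableEq α]

theorem mem_support_node {Y : Finset α} {ts : List (FTree α)} {a : α} :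
    a ∈ (FTree.node Y ts).support ↔ a ∈ Y ∨ ∃ t ∈ ts, a ∈ t.support := by
  induction ts with
  | nil => simp [support]
  | cons t ts ih =>
    simp only [support, Finset.mem_union, ih, List.mem_cons]
    constructor
    · rintro (h | h | ⟨u, hu, h⟩)
      · exact Or.inr ⟨t, Or.inl rfl, h⟩
      · exact Or.inl h
      · exact Or.inr ⟨u, Or.inr hu, h⟩
    · rintro (h | ⟨u, rfl | hu, h⟩)
      · exact Or.inr (Or.inl h)
      · exact Or.inl h
      · exact Or.inr (Or.inr ⟨u, hu, h⟩)

theorem label_subset_support (T : FTree α) : T.label ⊆ T.support := by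
  cases T with
  | node Y ts => intro a ha; exact mem_support_node.mpr (Or.inl ha)

theorem child_support_subset {Y : Finset α} {ts : List (FTree α)} {t : FTree α} (ht : t ∈ ts) :
    t.support ⊆ (FTree.node Y ts).support :=
  fun a ha => mem_support_node.mpr (Or.inr ⟨t, ht, ha⟩)

theorem mem_labels_node {Y : Finset α} {ts : List (FTree α)} {X : Finset α} :
    X ∈ (FTree.node Y ts).labels ↔ X = Y ∨ ∃ t ∈ ts, X ∈ t.labels := by
  induction ts with
  | nil => simp [labels]
  | cons t ts ih =>
    simp only [labels, List.mem_append, ih, List.mem_cons]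
    constructor
    · rintro (h | h | ⟨u, hu, h⟩)
      · exact Or.inr ⟨t, Or.inl rfl, h⟩
      · exact Or.inl h
      · exact Or.inr ⟨u, Or.inr hu, h⟩
    · rintro (h | ⟨u, rfl | hu, h⟩)
      · exact Or.inr (Or.inl h)
      · exact Or.inl h
      · exact Or.inr (Or.inr ⟨u, hu, h⟩)

theorem mem_nestsList {ts : List (FTree α)} {N : Finset α} :
    N ∈ FTree.nestsList ts ↔ ∃ t ∈ ts, N ∈ t.nests := by
  induction ts with
  | nil => simp [nestsList]
  | cons t ts ih =>
    simp only [nestsList, List.mem_append, ih, List.mem_cons]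
    constructor
    · rintro (h | ⟨u, hu, h⟩)
      · exact ⟨t, Or.inl rfl, h⟩
      · exact ⟨u, Or.inr hu, h⟩
    · rintro ⟨u, rfl | hu, h⟩
      · exact Or.inl h
      · exact Or.inr ⟨u, hu, h⟩

theorem mem_nests_node {Y : Finset α} {ts : List (FTree α)} {N : Finset α} :
    N ∈ (FTree.node Y ts).nests ↔ N = (FTree.node Y ts).support ∨ ∃ t ∈ ts, N ∈ t.nests := by
  rw [nests]; simp [List.mem_cons, mem_nestsList]

theorem labels_sum_node {Y : Finset α} {ts : List (FTree α)} (f : Finset α → ℕ) :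
    ((FTree.node Y ts).labels.map f).sum = f Y + (ts.map fun t => (t.labels.map f).sum).sum := by
  induction ts with
  | nil => simp [labels]
  | cons t ts ih => simp [labels, ih]; omega

/-- size via nests length -/
theorem nests_ne_nil (T : FTree α) : T.nests ≠ [] := by
  cases T with
  | node Y ts => rw [nests]; simp

theorem sz_lt {Y : Finset α} {ts : List (FTree α)} {t : FTree α} (ht : t ∈ ts) :
    t.nests.length < (FTree.node Y ts).nests.length := by
  rw [nests]
  simp only [List.length_cons]
  have : t.nests.length ≤ (FTree.nestsList ts).length := by
    induction ts with
    | nil => cases ht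
    | cons u ts ih =>
      rw [nestsList, List.length_append]
      rcases List.mem_cons.mp ht with rfl | h
      · omega
      · have := ih h; omega
  omega

end FTree
end Aux
namespace FTree
variable {α : Type*} [DecidableEq α]

theorem size_induction {P : FTree α → Prop}
    (h : ∀ (Y : Finset α) (ts : List (FTree α)), (∀ t ∈ ts, P t) → P (FTree.node Y ts)) :
    ∀ T, P T := by
  have key : ∀ (n : ℕ) (T : FTree α), T.nests.length ≤ n → P T := by
    intro n
    induction n with
    | zero =>
      intro T hT
      exact absurd (List.length_eq_zero_iff.mp (Nat.le_zero.mp hT)) (nests_ne_nil T)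
    | succ n ih =>
      intro T hT
      cases T with
      | node Y ts =>
        refine h Y ts fun t ht => ih t ?_
        have := sz_lt (Y := Y) ht
        omega
  exact fun T => key T.nests.length T le_rfl

theorem IsSubtree.trans {R S T : FTree α} (h1 : IsSubtree R S) (h2 : IsSubtree S T) :
    IsSubtree R T := by
  induction h2 with
  | refl => exact h1
  | child _ hmem ih => exact IsSubtree.child ih hmem

theorem isSubtree_of_child {Y : Finset α} {ts : List (FTree α)} {t : FTree α} (ht : t ∈ ts) :
    IsSubtree t (FTree.node Y ts) :=
  IsSubtree.child (IsSubtree.refl t) ht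

theorem IsSubtree.support_subset {R T : FTree α} (h : IsSubtree R T) :
    R.support ⊆ T.support := by
  induction h with
  | refl => exact subset_rfl
  | @child t u _ hmem ih =>
    refine ih.trans ?_
    cases u with
    | node Y ts => exact child_support_subset hmem

theorem mem_nests_iff {T : FTree α} {N : Finset α} :
    N ∈ T.nests ↔ ∃ R, IsSubtree R T ∧ R.support = N := by
  induction T using size_induction with
  | h Y ts ih =>
    rw [mem_nests_node]
    constructor
    · rintro (rfl | ⟨t, ht, hN⟩)
      · exact ⟨_, IsSubtree.refl _, rfl⟩
      · obtain ⟨R, hR, rfl⟩ := (ih t ht).mp hN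
        exact ⟨R, hR.trans (isSubtree_of_child ht), rfl⟩
    · rintro ⟨R, hR, rfl⟩
      cases hR with
      | refl => exact Or.inl rfl
      | child hs hmem => exact Or.inr ⟨_, hmem, (ih _ hmem).mpr ⟨R, hs, rfl⟩⟩

theorem mem_labels_iff {T : FTree α} {X : Finset α} :
    X ∈ T.labels ↔ ∃ R, IsSubtree R T ∧ R.label = X := by
  induction T using size_induction with
  | h Y ts ih =>
    rw [mem_labels_node]
    constructor
    · rintro (rfl | ⟨t, ht, hN⟩)
      · exact ⟨_, IsSubtree.refl _, rfl⟩
      · obtain ⟨R, hR, rfl⟩ := (ih t ht).mp hN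
        exact ⟨R, hR.trans (isSubtree_of_child ht), rfl⟩
    · rintro ⟨R, hR, rfl⟩
      cases hR with
      | refl => exact Or.inl rfl
      | child hs hmem => exact Or.inr ⟨_, hmem, (ih _ hmem).mpr ⟨R, hs, rfl⟩⟩

theorem exists_label_of_mem_support {T : FTree α} {v : α} (hv : v ∈ T.support) :
    ∃ R, IsSubtree R T ∧ v ∈ R.label := by
  induction T using size_induction with
  | h Y ts ih =>
    rcases mem_support_node.mp hv with h | ⟨t, ht, h⟩
    · exact ⟨_, IsSubtree.refl _, h⟩
    · obtain ⟨R, hR, hv'⟩ := ih t ht h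
      exact ⟨R, hR.trans (isSubtree_of_child ht), hv'⟩

/-- Structural well-formedness of a tree as a construct. -/
inductive Good : FTree α → Prop
  | node {Y : Finset α} {ts : List (FTree α)} :
      Y.Nonempty → (∀ t ∈ ts, Disjoint Y t.support) →
      ts.Pairwise (fun a b => Disjoint a.support b.support) →
      (∀ t ∈ ts, Good t) → Good (FTree.node Y ts)

theorem Good.label_nonempty {T : FTree α} (h : Good T) : T.label.Nonempty := by
  cases h with | node h1 _ _ _ => exact h1

theorem Good.support_nonempty {T : FTree α} (h : Good T) : T.support.Nonempty := by
  obtain ⟨v, hv⟩ := h.label_nonempty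
  exact ⟨v, label_subset_support T hv⟩

theorem Good.child {Y : Finset α} {ts : List (FTree α)} (h : Good (FTree.node Y ts))
    {t : FTree α} (ht : t ∈ ts) : Good t := by
  cases h with | node _ _ _ h4 => exact h4 t ht

theorem Good.disj_label_child {Y : Finset α} {ts : List (FTree α)}
    (h : Good (FTree.node Y ts)) {t : FTree α} (ht : t ∈ ts) : Disjoint Y t.support := by
  cases h with | node _ h2 _ _ => exact h2 t ht

theorem Good.of_isSubtree' {R T : FTree α} (h : IsSubtree R T) : Good T → Good R := by
  induction h with
  | refl => exact id
  | @child t u hs hmem ih =>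
    intro hT
    cases u with
    | node Y ts => exact ih (hT.child hmem)

theorem Good.of_isSubtree {R T : FTree α} (hT : Good T) (h : IsSubtree R T) : Good R :=
  Good.of_isSubtree' h hT

/-- Two subtrees of a good tree are comparable or have disjoint supports. -/
theorem Good.comp {T : FTree α} (hT : Good T) :
    ∀ R1 R2 : FTree α, IsSubtree R1 T → IsSubtree R2 T →
      IsSubtree R1 R2 ∨ IsSubtree R2 R1 ∨ Disjoint R1.support R2.support := by
  induction T using size_induction with
  | h Y ts ih =>
    intro R1 R2 h1 h2
    cases h1 with
    | refl => exact Or.inr (Or.inl h2)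
    | child hs1 hmem1 =>
      rename_i t1
      cases h2 with
      | refl => exact Or.inl (IsSubtree.child hs1 hmem1)
      | child hs2 hmem2 =>
        rename_i t2
        by_cases het : t1 = t2
        · subst het
          exact ih t1 hmem1 (hT.child hmem1) R1 R2 hs1 hs2
        · refine Or.inr (Or.inr ?_)
          have hd : Disjoint t1.support t2.support := by
            cases hT with
            | node _ _ h3 _ =>
              haveI : Std.Symm (fun a b : FTree α => Disjoint a.support b.support) :=
                ⟨fun a b hab => hab.symm⟩
              exact h3.forall hmem1 hmem2 het
          exact hd.mono hs1.support_subset hs2.support_subset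

theorem Good.strict_subset {R T : FTree α} (hT : Good T) (h : IsSubtree R T) (hne : R ≠ T) :
    Disjoint T.label R.support ∧ R.support ⊂ T.support := by
  cases h with
  | refl => exact absurd rfl hne
  | child hs hmem =>
    rename_i t
    obtain ⟨Y, ts⟩ := T
    have hd : Disjoint (FTree.node Y ts).label R.support :=
      (hT.disj_label_child hmem).mono_right hs.support_subset
    refine ⟨hd, (IsSubtree.child hs hmem).support_subset.ssubset_of_ne ?_⟩
    intro heq
    obtain ⟨v, hv⟩ := hT.label_nonempty
    exact Finset.disjoint_left.mp hd hv (heq ▸ label_subset_support _ hv)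

/-- Injectivity of support on subtrees of a good tree. -/
theorem Good.support_inj {T R1 R2 : FTree α} (hT : Good T)
    (h1 : IsSubtree R1 T) (h2 : IsSubtree R2 T) (he : R1.support = R2.support) : R1 = R2 := by
  rcases hT.comp R1 R2 h1 h2 with h | h | h
  · by_contra hne
    exact absurd he ((hT.of_isSubtree h2).strict_subset h hne).2.ne
  · by_contra hne
    exact absurd he.symm ((hT.of_isSubtree h1).strict_subset h (Ne.symm hne)).2.ne
  · obtain ⟨v, hv⟩ := (hT.of_isSubtree h1).support_nonempty
    exact absurd (he ▸ hv) (Finset.disjoint_left.mp h hv)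

/-- Minimality: if `v` is in the label of the subtree `R'` and in the support of the
subtree `R`, then `R'` is a subtree of `R`. -/
theorem Good.min_nest {T R R' : FTree α} (hT : Good T)
    (hR : IsSubtree R T) (hR' : IsSubtree R' T) {v : α} (hv : v ∈ R'.label)
    (hvR : v ∈ R.support) : IsSubtree R' R := by
  rcases hT.comp R' R hR' hR with h | h | h
  · exact h
  · by_cases hne : R = R'
    · exact hne ▸ IsSubtree.refl R
    · exact absurd hvR
        (Finset.disjoint_left.mp (((hT.of_isSubtree hR').strict_subset h hne).1) hv)
  · exact absurd hvR (Finset.disjoint_left.mp h (label_subset_support R' hv))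

/-- Uniqueness of the node whose label contains a given vertex. -/
theorem Good.label_node_unique {T R1 R2 : FTree α} (hT : Good T)
    (h1 : IsSubtree R1 T) (h2 : IsSubtree R2 T) {v : α} (hv1 : v ∈ R1.label)
    (hv2 : v ∈ R2.label) : R1 = R2 := by
  have ha : IsSubtree R1 R2 := hT.min_nest h2 h1 hv1 (label_subset_support R2 hv2)
  have hb : IsSubtree R2 R1 := hT.min_nest h1 h2 hv2 (label_subset_support R1 hv1)
  exact hT.support_inj h1 h2 (subset_antisymm ha.support_subset hb.support_subset)

end FTree
namespace FTree
variable {α : Type*} [DecidableEq α]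

theorem subtreeAtList_sound {ts : List (FTree α)} {X : Finset α} {R : FTree α}
    (h : FTree.subtreeAtList ts X = some R) : ∃ t ∈ ts, FTree.subtreeAt t X = some R := by
  induction ts with
  | nil => rw [subtreeAtList] at h; cases h
  | cons t ts ih =>
    rw [subtreeAtList] at h
    cases hh : FTree.subtreeAt t X with
    | none =>
      rw [hh] at h
      obtain ⟨u, hu, h'⟩ := ih h
      exact ⟨u, List.mem_cons_of_mem _ hu, h'⟩
    | some R' =>
      rw [hh] at h
      simp only [Option.elim] at h
      exact ⟨t, List.mem_cons_self, hh.trans h⟩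

theorem subtreeAt_sound {T : FTree α} {X : Finset α} {R : FTree α}
    (h : FTree.subtreeAt T X = some R) : IsSubtree R T ∧ R.label = X := by
  induction T using size_induction with
  | h Y ts ih =>
    rw [subtreeAt] at h
    by_cases hYX : Y = X
    · rw [if_pos hYX] at h
      obtain rfl : FTree.node Y ts = R := Option.some_injective _ h
      exact ⟨IsSubtree.refl _, hYX⟩
    · rw [if_neg hYX] at h
      obtain ⟨t, ht, h'⟩ := subtreeAtList_sound h
      obtain ⟨h1, h2⟩ := ih t ht h'
      exact ⟨h1.trans (isSubtree_of_child ht), h2⟩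

theorem subtreeAtList_complete {ts : List (FTree α)} {X : Finset α} {R t0 : FTree α}
    (ht0 : t0 ∈ ts) (h0 : FTree.subtreeAt t0 X = some R)
    (huniq : ∀ t ∈ ts, ∀ R'', FTree.subtreeAt t X = some R'' → R'' = R) :
    FTree.subtreeAtList ts X = some R := by
  induction ts with
  | nil => cases ht0
  | cons t ts ih =>
    rw [subtreeAtList]
    cases hh : FTree.subtreeAt t X with
    | none =>
      have ht0' : t0 ∈ ts := by
        rcases List.mem_cons.mp ht0 with rfl | h
        · rw [h0] at hh; cases hh
        · exact h
      exact ih ht0' fun t ht => huniq t (List.mem_cons_of_mem _ ht)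
    | some R' =>
      simp only [Option.elim]
      rw [huniq t (List.mem_cons_self) R' hh]

theorem subtreeAt_complete {T R : FTree α} {X : Finset α} (hT : Good T)
    (hR : IsSubtree R T) (hX : R.label = X) : FTree.subtreeAt T X = some R := by
  induction T using size_induction with
  | h Y ts ih =>
    obtain ⟨v, hv⟩ := (hT.of_isSubtree hR).label_nonempty
    rw [subtreeAt]
    by_cases hYX : Y = X
    · rw [if_pos hYX]
      have : R = FTree.node Y ts :=
        hT.label_node_unique hR (IsSubtree.refl _) hv (by rw [hX] at hv; exact hYX ▸ hv)
      rw [this]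
    · rw [if_neg hYX]
      have hRne : R ≠ FTree.node Y ts := by
        intro he; apply hYX; rw [← hX, he]; rfl
      have : ∃ t0 ∈ ts, IsSubtree R t0 := by
        cases hR with
        | refl => exact absurd rfl hRne
        | child hs hmem => exact ⟨_, hmem, hs⟩
      obtain ⟨t0, ht0, hs0⟩ := this
      refine subtreeAtList_complete ht0 (ih t0 ht0 (hT.child ht0) hs0) ?_
      intro t ht R'' h''
      obtain ⟨hsub'', hlab''⟩ := subtreeAt_sound h''
      exact hT.label_node_unique (hsub''.trans (isSubtree_of_child ht)) hR
        (hlab''.symm ▸ (hX ▸ hv : v ∈ X)) hv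

theorem suppAt_eq {T R : FTree α} {X : Finset α} (hT : Good T)
    (hR : IsSubtree R T) (hX : R.label = X) : T.suppAt X = R.support := by
  rw [suppAt, subtreeAt_complete hT hR hX]
  rfl

theorem suppAt_mem_nests {T R : FTree α} {X : Finset α} (hT : Good T)
    (hR : IsSubtree R T) (hX : R.label = X) : T.suppAt X ∈ T.nests := by
  rw [suppAt_eq hT hR hX]
  exact mem_nests_iff.mpr ⟨R, hR, rfl⟩

end FTree
namespace HGraph
variable {α : Type*} [DecidableEq α]

theorem restrict_verts {H : HGraph α} {X : Finset α} (h : X ⊆ H.verts) :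
    (H.restrict X).verts = X := Finset.inter_eq_left.mpr h

theorem ext' {H1 H2 : HGraph α} (h1 : H1.verts = H2.verts) (h2 : H1.edges = H2.edges) :
    H1 = H2 := by
  cases H1; cases H2; simp_all

theorem restrict_self (H : HGraph α) : H.restrict H.verts = H :=
  ext' (by rw [show (H.restrict H.verts).verts = H.verts ∩ H.verts from rfl,
    Finset.inter_self])
    (by rw [show (H.restrict H.verts).edges = H.edges.filter (· ⊆ H.verts) from rfl]
        exact Finset.filter_true_of_mem fun e heE => H.edges_subset e heE)

theorem restrict_restrict (H : HGraph α) {A B : Finset α} (h : B ⊆ A) :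
    (H.restrict A).restrict B = H.restrict B := by
  have hv0 : B ∩ (A ∩ H.verts) = B ∩ H.verts := by
    rw [← Finset.inter_assoc, Finset.inter_eq_left.mpr h]
  have hv : ((H.restrict A).restrict B).verts = (H.restrict B).verts := hv0
  have he0 : (H.edges.filter (· ⊆ A)).filter (· ⊆ B) = H.edges.filter (· ⊆ B) := by
    rw [Finset.filter_filter]
    apply Finset.filter_congr
    intro e _
    constructor
    · exact fun hx => hx.2
    · exact fun hx => ⟨hx.trans h, hx⟩
  have he : ((H.restrict A).restrict B).edges = (H.restrict B).edges := he0
  exact ext' hv he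

theorem connected_union {H : HGraph α} {C D : Finset α} (hC : (H.restrict C).Connected)
    (hD : (H.restrict D).Connected) (hCD : (C ∩ D).Nonempty) (hCv : C ⊆ H.verts)
    (hDv : D ⊆ H.verts) : (H.restrict (C ∪ D)).Connected := by
  obtain ⟨w, hw⟩ := hCD
  refine ⟨?_, ?_⟩
  · rw [restrict_verts (Finset.union_subset hCv hDv)]
    exact ⟨w, Finset.mem_union_left _ (Finset.mem_inter.mp hw).1⟩
  · intro X1 X2 h1 h2 hd hu
    rw [restrict_verts (Finset.union_subset hCv hDv)] at hu
    have hsplit : ∀ E : Finset α, E ⊆ H.verts → (H.restrict E).Connected → E ⊆ C ∪ D →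
        (E ∩ X1).Nonempty → (E ∩ X2).Nonempty →
        ∃ e ∈ (H.restrict (C ∪ D)).edges, ¬e ⊆ X1 ∧ ¬e ⊆ X2 := by
      intro E hEv hEc hECD hE1 hE2
      have hpart : (E ∩ X1) ∪ (E ∩ X2) = (H.restrict E).verts := by
        rw [restrict_verts hEv, ← Finset.inter_union_distrib_left, hu]
        exact Finset.inter_eq_left.mpr hECD
      obtain ⟨e, he, hne1, hne2⟩ := hEc.2 (E ∩ X1) (E ∩ X2) hE1 hE2
        (hd.mono Finset.inter_subset_right Finset.inter_subset_right) hpart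
      rw [restrict, Finset.mem_filter] at he
      refine ⟨e, ?_, ?_, ?_⟩
      · rw [restrict, Finset.mem_filter]
        exact ⟨he.1, he.2.trans hECD⟩
      · intro hs; exact hne1 (Finset.subset_inter he.2 hs)
      · intro hs; exact hne2 (Finset.subset_inter he.2 hs)
    have hCu : C ⊆ X1 ∪ X2 := hu ▸ Finset.subset_union_left
    have hDu : D ⊆ X1 ∪ X2 := hu ▸ Finset.subset_union_right
    have sideC : (C ∩ X1).Nonempty ∧ (C ∩ X2).Nonempty ∨ C ⊆ X1 ∨ C ⊆ X2 := by
      by_cases hx1 : (C ∩ X1).Nonempty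
      · by_cases hx2 : (C ∩ X2).Nonempty
        · exact Or.inl ⟨hx1, hx2⟩
        · refine Or.inr (Or.inl ?_)
          intro a ha
          rcases Finset.mem_union.mp (hCu ha) with h | h
          · exact h
          · exact absurd ⟨a, Finset.mem_inter.mpr ⟨ha, h⟩⟩ hx2
      · refine Or.inr (Or.inr ?_)
        intro a ha
        rcases Finset.mem_union.mp (hCu ha) with h | h
        · exact absurd ⟨a, Finset.mem_inter.mpr ⟨ha, h⟩⟩ hx1
        · exact h
    have sideD : (D ∩ X1).Nonempty ∧ (D ∩ X2).Nonempty ∨ D ⊆ X1 ∨ D ⊆ X2 := by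
      by_cases hx1 : (D ∩ X1).Nonempty
      · by_cases hx2 : (D ∩ X2).Nonempty
        · exact Or.inl ⟨hx1, hx2⟩
        · refine Or.inr (Or.inl ?_)
          intro a ha
          rcases Finset.mem_union.mp (hDu ha) with h | h
          · exact h
          · exact absurd ⟨a, Finset.mem_inter.mpr ⟨ha, h⟩⟩ hx2
      · refine Or.inr (Or.inr ?_)
        intro a ha
        rcases Finset.mem_union.mp (hDu ha) with h | h
        · exact absurd ⟨a, Finset.mem_inter.mpr ⟨ha, h⟩⟩ hx1
        · exact h
    rcases sideC with ⟨hx1, hx2⟩ | hC1 | hC2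
    · exact hsplit C hCv hC Finset.subset_union_left hx1 hx2
    · rcases sideD with ⟨hx1, hx2⟩ | hD1 | hD2
      · exact hsplit D hDv hD Finset.subset_union_right hx1 hx2
      · exfalso
        obtain ⟨b, hb⟩ := h2
        have : b ∈ X1 := by
          rcases Finset.mem_union.mp (hu ▸ (Finset.mem_union_right X1 hb) :
            b ∈ C ∪ D) with h | h
          · exact hC1 h
          · exact hD1 h
        exact Finset.disjoint_left.mp hd this hb
      · exact (Finset.disjoint_left.mp hd (hC1 (Finset.mem_inter.mp hw).1)
          (hD2 (Finset.mem_inter.mp hw).2)).elim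
    · rcases sideD with ⟨hx1, hx2⟩ | hD1 | hD2
      · exact hsplit D hDv hD Finset.subset_union_right hx1 hx2
      · exact (Finset.disjoint_left.mp hd (hD1 (Finset.mem_inter.mp hw).2)
          (hC2 (Finset.mem_inter.mp hw).1)).elim
      · exfalso
        obtain ⟨b, hb⟩ := h1
        have : b ∈ X2 := by
          rcases Finset.mem_union.mp (hu ▸ (Finset.mem_union_left X2 hb) :
            b ∈ C ∪ D) with h | h
          · exact hC2 h
          · exact hD2 h
        exact Finset.disjoint_left.mp hd hb this

theorem component_nonempty {H : HGraph α} {C : Finset α} (hC : H.IsComponent C) :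
    C.Nonempty := by
  obtain ⟨v, hv⟩ := hC.2.1.1
  exact ⟨v, (Finset.mem_inter.mp hv).1⟩

theorem exists_component (H : HGraph α) {v : α} (hv : v ∈ H.verts) :
    ∃ C, H.IsComponent C ∧ v ∈ C := by
  classical
  set S := H.verts.powerset.filter (fun D => v ∈ D ∧ (H.restrict D).Connected) with hS
  have hne : S.Nonempty := ⟨{v}, by
    rw [hS, Finset.mem_filter, Finset.mem_powerset]
    exact ⟨Finset.singleton_subset_iff.mpr hv, Finset.mem_singleton_self v,
      H.singleton_connected hv⟩⟩
  obtain ⟨C, hCS, hmax⟩ := S.exists_max_image Finset.card hne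
  rw [hS, Finset.mem_filter, Finset.mem_powerset] at hCS
  refine ⟨C, ⟨hCS.1, hCS.2.2, ?_⟩, hCS.2.1⟩
  intro D hCD hDv hDc
  have hDS : D ∈ S := by
    rw [hS, Finset.mem_filter, Finset.mem_powerset]
    exact ⟨hDv, hCD hCS.2.1, hDc⟩
  exact (Finset.eq_of_subset_of_card_le hCD (hmax D hDS)).symm

theorem component_disjoint {H : HGraph α} {C D : Finset α} (hC : H.IsComponent C)
    (hD : H.IsComponent D) (hne : C ≠ D) : Disjoint C D := by
  by_contra hnd
  obtain ⟨w, hw⟩ := Finset.not_disjoint_iff_nonempty_inter.mp hnd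
  have hu : (H.restrict (C ∪ D)).Connected :=
    connected_union hC.2.1 hD.2.1 ⟨w, hw⟩ hC.1 hD.1
  have h1 := hC.2.2 (C ∪ D) Finset.subset_union_left (Finset.union_subset hC.1 hD.1) hu
  have h2 := hD.2.2 (C ∪ D) Finset.subset_union_right (Finset.union_subset hC.1 hD.1) hu
  exact hne (h1.symm.trans h2)

theorem component_unique {H : HGraph α} {C D : Finset α} (hC : H.IsComponent C)
    (hD : H.IsComponent D) {v : α} (hvC : v ∈ C) (hvD : v ∈ D) : C = D := by
  by_contra hne
  exact Finset.disjoint_left.mp (component_disjoint hC hD hne) hvC hvD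

end HGraph
section Constructs
open FTree HGraph
variable {α : Type*} [LinearOrder α]

theorem construct_support {H : HGraph α} {T : FTree α} (h : IsConstruct H T) :
    T.support = H.verts := by
  induction h with
  | @node H Y ts hY hYsub hmem hcover hsorted hchild ih =>
    have hverts : (H.restrict (H.verts \ Y)).verts = H.verts \ Y :=
      restrict_verts (Finset.sdiff_subset)
    ext a
    rw [mem_support_node]
    constructor
    · rintro (ha | ⟨t, ht, ha⟩)
      · exact hYsub ha
      · have := (hmem t ht).1
        rw [hverts] at this
        exact (Finset.mem_sdiff.mp (this ha)).1
    · intro ha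
      by_cases haY : a ∈ Y
      · exact Or.inl haY
      · have ha' : a ∈ (H.restrict (H.verts \ Y)).verts := by
          rw [hverts]; exact Finset.mem_sdiff.mpr ⟨ha, haY⟩
        obtain ⟨C, hC, haC⟩ := (H.restrict (H.verts \ Y)).exists_component ha'
        obtain ⟨t, ht, hts⟩ := hcover C hC
        exact Or.inr ⟨t, ht, hts ▸ haC⟩

theorem construct_good {H : HGraph α} {T : FTree α} (h : IsConstruct H T) : Good T := by
  induction h with
  | @node H Y ts hY hYsub hmem hcover hsorted hchild ih =>
    have hverts : (H.restrict (H.verts \ Y)).verts = H.verts \ Y :=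
      restrict_verts (Finset.sdiff_subset)
    refine Good.node hY ?_ ?_ ih
    · intro t ht
      have h1 := (hmem t ht).1
      rw [hverts] at h1
      exact Finset.disjoint_left.mpr fun a haY hat =>
        (Finset.mem_sdiff.mp (h1 hat)).2 haY
    · refine hsorted.imp_of_mem ?_
      intro a b ha hb hab
      refine component_disjoint (hmem a ha) (hmem b hb) ?_
      intro he
      rw [he] at hab
      exact lt_irrefl _ hab

theorem construct_sub' {R T : FTree α} (hsub : IsSubtree R T) :
    ∀ H : HGraph α, IsConstruct H T → IsConstruct (H.restrict R.support) R := by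
  induction hsub with
  | refl =>
    intro H h
    rw [construct_support h, restrict_self]
    exact h
  | @child t u hs hmem ih =>
    intro H h
    obtain ⟨Y, ts⟩ := u
    have hchild : IsConstruct (H.restrict t.support) t := by
      cases h with
      | node _ _ _ _ _ _ _ hchild => exact hchild t hmem
    have := ih (H.restrict t.support) hchild
    rwa [restrict_restrict _ hs.support_subset] at this

theorem construct_sub {H : HGraph α} {R T : FTree α} (hT : IsConstruct H T)
    (hsub : IsSubtree R T) : IsConstruct (H.restrict R.support) R :=
  construct_sub' hsub H hT

theorem root_label_eq {H : HGraph α} {Y : Finset α} {ts : List (FTree α)}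
    (h : IsConstruct H (FTree.node Y ts)) :
    Y = H.verts \ ((FTree.node Y ts).nestSet.filter (· ≠ H.verts)).biUnion id := by
  have hG := construct_good h
  have hsupp := construct_support h
  cases h with
  | node _ _ hY hYsub hmem hcover hsorted hchild =>
    have hverts : (H.restrict (H.verts \ Y)).verts = H.verts \ Y :=
      restrict_verts (Finset.sdiff_subset)
    ext a
    simp only [Finset.mem_sdiff, Finset.mem_biUnion, Finset.mem_filter, id_eq, not_exists,
      not_and]
    constructor
    · intro ha
      refine ⟨hYsub ha, ?_⟩
      rintro N ⟨hN, hne⟩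
      rw [FTree.nestSet, List.mem_toFinset] at hN
      obtain ⟨R, hR, rfl⟩ := mem_nests_iff.mp hN
      intro haN
      cases hR with
      | refl => exact hne hsupp
      | child hs hmem' =>
        have : R.support ⊆ _ := hs.support_subset
        rename_i t
        have h1 := (hmem t hmem').1
        rw [hverts] at h1
        exact (Finset.mem_sdiff.mp (h1 (this haN))).2 ha
    · rintro ⟨ha, hall⟩
      by_contra haY
      have ha' : a ∈ (H.restrict (H.verts \ Y)).verts := by
        rw [hverts]; exact Finset.mem_sdiff.mpr ⟨ha, haY⟩
      obtain ⟨C, hC, haC⟩ := (H.restrict (H.verts \ Y)).exists_component ha'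
      obtain ⟨t, ht, hts⟩ := hcover C hC
      have hN : t.support ∈ (FTree.node Y ts).nestSet := by
        rw [FTree.nestSet, List.mem_toFinset]
        exact mem_nests_iff.mpr ⟨t, isSubtree_of_child ht, rfl⟩
      have hne : t.support ≠ H.verts := by
        intro he
        obtain ⟨y, hy⟩ := hY
        have h1 := (hmem t ht).1
        rw [hverts] at h1
        exact (Finset.mem_sdiff.mp (h1 (he ▸ hYsub hy))).2 hy
      exact hall t.support ⟨hN, hne⟩ (hts ▸ haC)

theorem child_nestSet {H : HGraph α} {Y : Finset α} {ts : List (FTree α)}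
    (h : IsConstruct H (FTree.node Y ts)) {t : FTree α} (ht : t ∈ ts) :
    t.nestSet = (FTree.node Y ts).nestSet.filter (· ⊆ t.support) := by
  have hG := construct_good h
  have hsupp := construct_support h
  cases h with
  | node _ _ hY hYsub hmem hcover hsorted hchild =>
    ext N
    simp only [Finset.mem_filter, FTree.nestSet, List.mem_toFinset]
    constructor
    · intro hN
      obtain ⟨R, hR, rfl⟩ := mem_nests_iff.mp hN
      exact ⟨mem_nests_node.mpr (Or.inr ⟨t, ht, hN⟩), hR.support_subset⟩
    · rintro ⟨hN, hsub⟩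
      obtain ⟨R, hR, rfl⟩ := mem_nests_iff.mp hN
      cases hR with
      | refl =>
        exfalso
        obtain ⟨y, hy⟩ := hY
        have : y ∈ t.support := hsub (by rw [hsupp] at *; exact hYsub hy)
        exact Finset.disjoint_left.mp (hG.disj_label_child ht) hy this
      | child hs hmem' =>
        rename_i t'
        by_cases het : t' = t
        · subst het
          exact mem_nests_iff.mpr ⟨R, hs, rfl⟩
        · exfalso
          have hd : Disjoint t'.support t.support := by
            cases hG with
            | node _ _ h3 _ =>
              haveI : Std.Symm (fun a b : FTree α => Disjoint a.support b.support) :=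
                ⟨fun a b hab => hab.symm⟩
              exact h3.forall hmem' ht het
          obtain ⟨v, hv⟩ := (hG.of_isSubtree (hs.trans (isSubtree_of_child hmem'))).support_nonempty
          exact Finset.disjoint_left.mp hd (hs.support_subset hv) (hsub hv)

theorem map_support_eq_lists {ss tt : List (FTree α)}
    (h : ss.map FTree.support = tt.map FTree.support)
    (hp : ∀ s ∈ ss, ∀ t ∈ tt, s.support = t.support → s = t) : ss = tt := by
  induction ss generalizing tt with
  | nil => cases tt with
    | nil => rfl
    | cons t tt => cases h
  | cons s ss ih =>
    cases tt with
    | nil => cases h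
    | cons t tt =>
      simp only [List.map_cons, List.cons.injEq] at h
      have hst : s = t := hp s (List.mem_cons_self) t (List.mem_cons_self) h.1
      rw [hst, ih h.2 fun s' hs' t' ht' he =>
        hp s' (List.mem_cons_of_mem _ hs') t' (List.mem_cons_of_mem _ ht') he]

/-- A construct of `H` is determined by its nested set. -/
theorem construct_nestSet_inj {S : FTree α} :
    ∀ {H : HGraph α} {T : FTree α}, IsConstruct H S → IsConstruct H T →
      S.nestSet = T.nestSet → S = T := by
  induction S using size_induction with
  | h Y ss ih =>
    intro H T hS hT hst
    obtain ⟨Z, tt⟩ := T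
    have hYZ : Y = Z := by
      rw [root_label_eq hS, root_label_eq hT, hst]
    subst hYZ
    -- children supports are the components, sorted by max
    have hGS := construct_good hS
    have hGT := construct_good hT
    have hmapeq : ss.map FTree.support = tt.map FTree.support := by
      have memS : ∀ C, C ∈ ss.map FTree.support ↔
          (H.restrict (H.verts \ Y)).IsComponent C := by
        intro C
        cases hS with
        | node _ _ hY hYsub hmem hcover hsorted hchild =>
          simp only [List.mem_map]
          exact ⟨fun ⟨t, ht, he⟩ => he ▸ hmem t ht,
            fun hC => (hcover C hC).elim fun t ht => ⟨t, ht.1, ht.2⟩⟩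
      have memT : ∀ C, C ∈ tt.map FTree.support ↔
          (H.restrict (H.verts \ Y)).IsComponent C := by
        intro C
        cases hT with
        | node _ _ hY hYsub hmem hcover hsorted hchild =>
          simp only [List.mem_map]
          exact ⟨fun ⟨t, ht, he⟩ => he ▸ hmem t ht,
            fun hC => (hcover C hC).elim fun t ht => ⟨t, ht.1, ht.2⟩⟩
      have sortS : (ss.map FTree.support).Pairwise (fun C D : Finset α => C.max < D.max) := by
        cases hS with
        | node _ _ _ _ _ _ hsorted _ => exact List.Pairwise.map _ (fun a b h => h) hsorted
      have sortT : (tt.map FTree.support).Pairwise (fun C D : Finset α => C.max < D.max) := by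
        cases hT with
        | node _ _ _ _ _ _ hsorted _ => exact List.Pairwise.map _ (fun a b h => h) hsorted
      have ndS : (ss.map FTree.support).Nodup :=
        sortS.imp fun h => by intro he; rw [he] at h; exact lt_irrefl _ h
      have ndT : (tt.map FTree.support).Nodup :=
        sortT.imp fun h => by intro he; rw [he] at h; exact lt_irrefl _ h
      have hperm : (ss.map FTree.support).Perm (tt.map FTree.support) := by
        rw [List.perm_ext_iff_of_nodup ndS ndT]
        intro C
        rw [memS, memT]
      haveI : Std.Antisymm (fun C D : Finset α => C.max < D.max) :=
        ⟨fun a b h1 h2 => absurd (h1.trans h2) (lt_irrefl _)⟩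
      exact List.Perm.eq_of_pairwise' sortS sortT hperm
    have hch : ss = tt := by
      refine map_support_eq_lists hmapeq ?_
      intro s hs t ht he
      have hcs : IsConstruct (H.restrict s.support) s :=
        construct_sub hS (isSubtree_of_child hs)
      have hct : IsConstruct (H.restrict s.support) t := by
        rw [he]; exact construct_sub hT (isSubtree_of_child ht)
      refine ih s hs hcs hct ?_
      rw [child_nestSet hS hs, child_nestSet hT ht, hst, he]
    rw [hch]
end Constructs
section FlipAnalysis
open FTree HGraph
variable {α : Type*} [LinearOrder α]

theorem mem_nestSet_iff {T : FTree α} {N : Finset α} :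
    N ∈ T.nestSet ↔ ∃ R, IsSubtree R T ∧ R.support = N := by
  rw [FTree.nestSet, List.mem_toFinset]; exact mem_nests_iff

theorem min_nest_set {T R : FTree α} (hG : Good T) (hR : IsSubtree R T) {v : α}
    (hv : v ∈ R.label) {N : Finset α} (hN : N ∈ T.nestSet) (hvN : v ∈ N) :
    R.support ⊆ N := by
  obtain ⟨R', hR', rfl⟩ := mem_nestSet_iff.mp hN
  exact (hG.min_nest hR' hR hv hvN).support_subset

theorem constr_node {H : HGraph α} {S : FTree α} (hS : IsConstruction H S) {z : α}
    (hz : z ∈ H.verts) : ∃ R, IsSubtree R S ∧ R.label = {z} := by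
  have hz' : z ∈ S.support := by rw [construct_support hS.1]; exact hz
  obtain ⟨R, hR, hzR⟩ := exists_label_of_mem_support hz'
  have hcard : R.label.card = 1 := hS.2 _ (mem_labels_iff.mpr ⟨R, hR, rfl⟩)
  obtain ⟨a, ha⟩ := Finset.card_eq_one.mp hcard
  rw [ha] at hzR
  obtain rfl := Finset.mem_singleton.mp hzR
  exact ⟨R, hR, ha⟩

/-- The key combinatorial analysis of a flip. -/
theorem flip_analysis {H : HGraph α} {S T : FTree α} (h : Flip H S T) :
    ∃ x y : α, x ∈ H.verts ∧ y ∈ H.verts ∧ x < y ∧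
      T.suppAt {x} ⊂ S.suppAt {x} ∧
      ∀ z ∈ H.verts, z ≠ x → z ≠ y → T.suppAt {z} = S.suppAt {z} := by
  obtain ⟨hS, hT, hne, V, x, y, hV, hdim, hxy, hlabV,
    ⟨NS, hNSmem, hNSne, hNSeq⟩, ⟨NT, hNTmem, hNTne, hNTeq⟩,
    ⟨Rx, hRxsub, hRxlab, ty, hty, htylab⟩, hlt⟩ := h
  have hGS : Good S := construct_good hS.1
  have hGT : Good T := construct_good hT.1
  have hGV : Good V := construct_good hV
  have hsuppS : S.support = H.verts := construct_support hS.1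
  have hsuppT : T.support = H.verts := construct_support hT.1
  have hsuppV : V.support = H.verts := construct_support hV
  -- the pair node of V
  obtain ⟨RV, hRVsub, hRVlab⟩ := mem_labels_iff.mp hlabV
  set P := RV.support with hP
  have hxRV : x ∈ RV.label := by rw [hRVlab]; exact Finset.mem_insert_self _ _
  have hyRV : y ∈ RV.label := by
    rw [hRVlab]; exact Finset.mem_insert_of_mem (Finset.mem_singleton_self _)
  have hxP : x ∈ P := label_subset_support RV hxRV
  have hyP : y ∈ P := label_subset_support RV hyRV
  have hxv : x ∈ H.verts := hsuppV ▸ hRVsub.support_subset hxP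
  have hyv : y ∈ H.verts := hsuppV ▸ hRVsub.support_subset hyP
  have hPV : P ∈ V.nestSet := mem_nestSet_iff.mpr ⟨RV, hRVsub, rfl⟩
  have hPS : P ∈ S.nestSet := by
    rw [hNSeq] at hPV; exact Finset.mem_of_mem_erase hPV
  have hPT : P ∈ T.nestSet := by
    have := hPV; rw [hNTeq] at this; exact Finset.mem_of_mem_erase this
  -- memberships transfers
  have memVS : ∀ N, N ∈ V.nestSet → N ∈ S.nestSet := by
    intro N hN; rw [hNSeq] at hN; exact Finset.mem_of_mem_erase hN
  have memVT : ∀ N, N ∈ V.nestSet → N ∈ T.nestSet := by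
    intro N hN; rw [hNTeq] at hN; exact Finset.mem_of_mem_erase hN
  have memSV : ∀ N, N ∈ S.nestSet → N ≠ NS → N ∈ V.nestSet := by
    intro N hN hne'; rw [hNSeq]; exact Finset.mem_erase.mpr ⟨hne', hN⟩
  have memTV : ∀ N, N ∈ T.nestSet → N ≠ NT → N ∈ V.nestSet := by
    intro N hN hne'; rw [hNTeq]; exact Finset.mem_erase.mpr ⟨hne', hN⟩
  -- minimality in V
  have minVx : ∀ N ∈ V.nestSet, x ∈ N → P ⊆ N := fun N hN hxN =>
    min_nest_set hGV hRVsub hxRV hN hxN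
  have minVy : ∀ N ∈ V.nestSet, y ∈ N → P ⊆ N := fun N hN hyN =>
    min_nest_set hGV hRVsub hyRV hN hyN
  -- S-side structure
  have htysub : IsSubtree ty S := by
    refine IsSubtree.trans ?_ hRxsub
    obtain ⟨XL, cs⟩ := Rx
    exact isSubtree_of_child hty
  have hyQ : y ∈ ty.support := label_subset_support ty (htylab ▸ Finset.mem_singleton_self y)
  set Q := ty.support with hQ
  have hxRxlab : x ∈ Rx.label := hRxlab ▸ Finset.mem_singleton_self x
  have hxPx : x ∈ Rx.support := label_subset_support Rx hxRxlab
  have hxQ : x ∉ Q := by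
    intro hxQ
    obtain ⟨XL, cs⟩ := Rx
    exact Finset.disjoint_left.mp ((hGS.of_isSubtree hRxsub).disj_label_child hty)
      hxRxlab hxQ
  have hQS : Q ∈ S.nestSet := mem_nestSet_iff.mpr ⟨ty, htysub, rfl⟩
  -- N_S = Q
  have hNSQ : NS = Q := by
    by_contra hne'
    have hQV : Q ∈ V.nestSet := memSV Q hQS (fun he => hne' he.symm)
    exact hxQ (minVy Q hQV hyQ hxP)
  -- P = Rx.support
  have hPx : Rx.support = P := by
    have hPxS : Rx.support ∈ S.nestSet := mem_nestSet_iff.mpr ⟨Rx, hRxsub, rfl⟩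
    have hPxne : Rx.support ≠ NS := by
      rw [hNSQ]; intro he; exact hxQ (he ▸ hxPx)
    have h1 : P ⊆ Rx.support := minVx _ (memSV _ hPxS hPxne) hxPx
    have h2 : Rx.support ⊆ P := min_nest_set hGS hRxsub hxRxlab hPS hxP
    exact subset_antisymm h2 h1
  -- T-side nodes
  obtain ⟨RTx, hRTxsub, hRTxlab⟩ := constr_node hT hxv
  obtain ⟨RTy, hRTysub, hRTylab⟩ := constr_node hT hyv
  have hxRTx : x ∈ RTx.label := hRTxlab ▸ Finset.mem_singleton_self x
  have hyRTy : y ∈ RTy.label := hRTylab ▸ Finset.mem_singleton_self y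
  have hxsTx : x ∈ RTx.support := label_subset_support RTx hxRTx
  have hysTy : y ∈ RTy.support := label_subset_support RTy hyRTy
  have hsTxS : RTx.support ∈ T.nestSet := mem_nestSet_iff.mpr ⟨RTx, hRTxsub, rfl⟩
  have hsTyS : RTy.support ∈ T.nestSet := mem_nestSet_iff.mpr ⟨RTy, hRTysub, rfl⟩
  have hsTxP : RTx.support ⊆ P := min_nest_set hGT hRTxsub hxRTx hPT hxP
  have hsTyP : RTy.support ⊆ P := min_nest_set hGT hRTysub hyRTy hPT hyP
  have hRTxy : RTx ≠ RTy := by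
    intro he
    have : ({x} : Finset α) = {y} := by rw [← hRTxlab, he, hRTylab]
    exact absurd (Finset.singleton_injective this) (ne_of_lt hlt)
  have hsTne : RTx.support ≠ RTy.support := fun he => hRTxy (hGT.support_inj hRTxsub hRTysub he)
  have hxyne : x ≠ y := ne_of_lt hlt
  -- identify N_T
  have hcases : RTx.support = NT ∨ RTy.support = NT := by
    by_contra hc
    push_neg at hc
    have h1 : RTx.support = P :=
      subset_antisymm hsTxP (minVx _ (memTV _ hsTxS hc.1) hxsTx)
    have h2 : RTy.support = P :=
      subset_antisymm hsTyP (minVy _ (memTV _ hsTyS hc.2) hysTy)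
    exact hsTne (h1.trans h2.symm)
  -- S-side constructs of the region
  have hPsub : P ⊆ H.verts := hsuppV ▸ hRVsub.support_subset
  have hRxconstr : IsConstruct (H.restrict P) Rx := by
    have := construct_sub hS.1 hRxsub
    rwa [hPx] at this
  have hvertsP : (H.restrict P).verts = P := restrict_verts hPsub
  rcases hcases with hcx | hcy
  · -- main case : N_T is the x-node of T
    have hsTyV : RTy.support ∈ V.nestSet := by
      refine memTV _ hsTyS ?_
      rw [← hcx]; exact fun he => hsTne he.symm
    have hsTyP' : RTy.support = P := subset_antisymm hsTyP (minVy _ hsTyV hysTy)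
    have hynotin : y ∉ RTx.support := by
      intro hyin
      have h1 : RTy.support ⊆ RTx.support := min_nest_set hGT hRTysub hyRTy hsTxS hyin
      have h2 : P ⊆ RTx.support := hsTyP' ▸ h1
      exact hsTne (subset_antisymm hsTxP h2 ▸ hsTyP'.symm ▸ rfl)
    refine ⟨x, y, hxv, hyv, hlt, ?_, ?_⟩
    · rw [suppAt_eq hGT hRTxsub hRTxlab, suppAt_eq hGS hRxsub hRxlab, hPx]
      exact Finset.ssubset_iff_of_subset hsTxP |>.mpr ⟨y, hyP, hynotin⟩
    · intro z hz hzx hzy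
      obtain ⟨RSz, hRSzsub, hRSzlab⟩ := constr_node hS hz
      obtain ⟨RTz, hRTzsub, hRTzlab⟩ := constr_node hT hz
      have hzRSz : z ∈ RSz.label := hRSzlab ▸ Finset.mem_singleton_self z
      have hzRTz : z ∈ RTz.label := hRTzlab ▸ Finset.mem_singleton_self z
      have hzsS : z ∈ RSz.support := label_subset_support _ hzRSz
      have hzsT : z ∈ RTz.support := label_subset_support _ hzRTz
      have hSzS : RSz.support ∈ S.nestSet := mem_nestSet_iff.mpr ⟨RSz, hRSzsub, rfl⟩
      have hTzS : RTz.support ∈ T.nestSet := mem_nestSet_iff.mpr ⟨RTz, hRTzsub, rfl⟩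
      have hSzne : RSz.support ≠ NS := by
        rw [hNSQ]
        intro he
        have : RSz = ty := hGS.support_inj hRSzsub htysub he
        rw [this, htylab] at hRSzlab
        exact hzy (Finset.singleton_injective hRSzlab.symm)
      have hTzne : RTz.support ≠ NT := by
        rw [← hcx]
        intro he
        have : RTz = RTx := hGT.support_inj hRTzsub hRTxsub he
        rw [this, hRTxlab] at hRTzlab
        exact hzx (Finset.singleton_injective hRTzlab.symm)
      have h1 : RTz.support ⊆ RSz.support :=
        min_nest_set hGT hRTzsub hzRTz (memVT _ (memSV _ hSzS hSzne)) hzsS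
      have h2 : RSz.support ⊆ RTz.support :=
        min_nest_set hGS hRSzsub hzRSz (memVS _ (memTV _ hTzS hTzne)) hzsT
      rw [suppAt_eq hGT hRTzsub hRTzlab, suppAt_eq hGS hRSzsub hRSzlab]
      exact subset_antisymm h1 h2
  · -- degenerate case : N_T is the y-node of T ; then S = T, contradiction
    exfalso
    have hsTxV : RTx.support ∈ V.nestSet := by
      refine memTV _ hsTxS ?_
      rw [← hcy]; exact fun he => hsTne he
    have hsTxP' : RTx.support = P := subset_antisymm hsTxP (minVx _ hsTxV hxsTx)
    -- RTx is the region node of T; its children are components of H ↾ (P \ {x})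
    have hRTxconstr : IsConstruct (H.restrict P) RTx := by
      have := construct_sub hT.1 hRTxsub
      rwa [hsTxP'] at this
    -- the component of P \ {x} containing y, on both sides
    have hcompS : ((H.restrict P).restrict ((H.restrict P).verts \ {x})).IsComponent Q := by
      obtain ⟨XS, csS⟩ := Rx
      have hXS : XS = {x} := hRxlab
      subst hXS
      cases hRxconstr with
      | node _ _ hY hYsub hmem hcover hsorted hchild => exact hmem ty hty
    obtain ⟨XT, cs⟩ := RTx
    have hXTx : XT = {x} := hRTxlab
    subst hXTx
    have hyT : y ∈ FTree.support (FTree.node {x} cs) := by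
      have : y ∈ (H.restrict P).verts := by rw [hvertsP]; exact hyP
      rw [construct_support hRTxconstr]; exact this
    obtain ⟨tstar, htstar, hytstar⟩ : ∃ t ∈ cs, y ∈ t.support := by
      rcases mem_support_node.mp hyT with h | h
      · exact absurd (Finset.mem_singleton.mp h) (Ne.symm hxyne)
      · exact h
    have hcompT : ((H.restrict P).restrict ((H.restrict P).verts \ {x})).IsComponent
        tstar.support := by
      cases hRTxconstr with
      | node _ _ hY hYsub hmem hcover hsorted hchild => exact hmem tstar htstar
    have hQt : Q = tstar.support := component_unique hcompS hcompT hyQ hytstar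
    have htssub : IsSubtree tstar T :=
      (isSubtree_of_child htstar).trans hRTxsub
    have htsS : tstar.support ∈ T.nestSet := mem_nestSet_iff.mpr ⟨tstar, htssub, rfl⟩
    have hQT : Q ∈ T.nestSet := hQt ▸ htsS
    have hQsub : Q ⊆ P \ {x} := by
      have h1 := hcompS.1
      rwa [restrict_verts, hvertsP] at h1
      rw [hvertsP]
      exact Finset.sdiff_subset
    have hsTyQ : RTy.support ⊆ Q := min_nest_set hGT hRTysub hyRTy hQT hyQ
    have hQNT : Q = NT := by
      by_contra hne'
      have hQV : Q ∈ V.nestSet := memTV _ hQT hne'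
      have : P ⊆ Q := minVy _ hQV hyQ
      exact (Finset.mem_sdiff.mp (hQsub (this hxP))).2 (Finset.mem_singleton_self x)
    have hSTeq : S.nestSet = T.nestSet := by
      have hNSS : NS ∈ S.nestSet := by
        rw [FTree.nestSet, List.mem_toFinset]; exact hNSmem
      have hNTT : NT ∈ T.nestSet := by
        rw [FTree.nestSet, List.mem_toFinset]; exact hNTmem
      have h1 : S.nestSet = insert NS V.nestSet := by
        rw [hNSeq, Finset.insert_erase hNSS]
      have h2 : T.nestSet = insert NT V.nestSet := by
        rw [hNTeq, Finset.insert_erase hNTT]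
      rw [h1, h2, hNSQ, hQNT]
    exact hne (construct_nestSet_inj hS.1 hT.1 hSTeq)
end FlipAnalysis
section Measure
open FTree HGraph
variable {α : Type*} [LinearOrder α]

theorem suppAt_subset_support (T : FTree α) (X : Finset α) : T.suppAt X ⊆ T.support := by
  cases h : FTree.subtreeAt T X with
  | none => rw [suppAt, h]; exact Finset.empty_subset _
  | some R =>
    rw [suppAt, h]
    exact (subtreeAt_sound h).1.support_subset

/-- The termination measure. -/
def measFn (H : HGraph α) (S : FTree α) : ℕ :=
  ∑ z ∈ H.verts, (S.suppAt {z}).card *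
    (H.verts.card + 1) ^ ((H.verts.filter fun w => z < w).card)

theorem flip_measFn_lt {H : HGraph α} {S T : FTree α} (h : Flip H S T) :
    measFn H T < measFn H S := by
  obtain ⟨x, y, hxv, hyv, hlt, hssub, heq⟩ := flip_analysis h
  have hT : IsConstruction H T := h.2.1
  set n := H.verts.card with hn
  set B := H.verts.card + 1 with hB
  set k : α → ℕ := fun z => (H.verts.filter fun w => z < w).card with hk
  set fS : α → ℕ := fun z => (S.suppAt {z}).card with hfS
  set fT : α → ℕ := fun z => (T.suppAt {z}).card with hfT
  have hky : k y + 1 ≤ k x := by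
    have hss : (H.verts.filter fun w => y < w) ⊂ (H.verts.filter fun w => x < w) := by
      constructor
      · intro w hw
        rw [Finset.mem_filter] at hw ⊢
        exact ⟨hw.1, hlt.trans hw.2⟩
      · intro hsub
        have : y ∈ H.verts.filter fun w => x < w := Finset.mem_filter.mpr ⟨hyv, hlt⟩
        have := Finset.mem_filter.mp (hsub this)
        exact lt_irrefl y this.2
    exact Finset.card_lt_card hss
  have hfx : fT x < fS x := Finset.card_lt_card hssub
  have hfTy : fT y ≤ n := by
    rw [hfT, hn]
    exact Finset.card_le_card
      ((suppAt_subset_support T {y}).trans (construct_support hT.1).le)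
  have hyx : y ≠ x := (ne_of_lt hlt).symm
  have hyex : y ∈ H.verts.erase x := Finset.mem_erase.mpr ⟨hyx, hyv⟩
  -- split the sums
  have splitS : measFn H S =
      (∑ z ∈ (H.verts.erase x).erase y, fS z * B ^ k z) + fS y * B ^ k y + fS x * B ^ k x := by
    rw [measFn]
    rw [← Finset.sum_erase_add _ _ hxv, ← Finset.sum_erase_add _ _ hyex]
  have splitT : measFn H T =
      (∑ z ∈ (H.verts.erase x).erase y, fT z * B ^ k z) + fT y * B ^ k y + fT x * B ^ k x := by
    rw [measFn]
    rw [← Finset.sum_erase_add _ _ hxv, ← Finset.sum_erase_add _ _ hyex]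
  have hsame : ∑ z ∈ (H.verts.erase x).erase y, fT z * B ^ k z
      = ∑ z ∈ (H.verts.erase x).erase y, fS z * B ^ k z := by
    refine Finset.sum_congr rfl ?_
    intro z hz
    have h1 := Finset.mem_erase.mp hz
    have h2 := Finset.mem_erase.mp h1.2
    show (T.suppAt {z}).card * B ^ k z = (S.suppAt {z}).card * B ^ k z
    rw [heq z h2.2 h2.1 h1.1]
  rw [splitS, splitT, hsame]
  have hfx1 : 1 ≤ fS x := by omega
  have hBpow : 0 < B ^ k y := Nat.pow_pos (by omega)
  have key : fT y * B ^ k y + fT x * B ^ k x < fS y * B ^ k y + fS x * B ^ k x := by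
    have e1 : fT x * B ^ k x ≤ (fS x - 1) * B ^ k x :=
      Nat.mul_le_mul_right _ (by omega)
    have e2 : fT y * B ^ k y ≤ n * B ^ k y := Nat.mul_le_mul_right _ hfTy
    have e3 : n * B ^ k y < B ^ (k y + 1) := by
      rw [pow_succ]
      calc n * B ^ k y < B * B ^ k y := Nat.mul_lt_mul_of_lt_of_le (by omega) le_rfl hBpow
        _ = B ^ k y * B := Nat.mul_comm _ _
    have e4 : B ^ (k y + 1) ≤ B ^ k x := Nat.pow_le_pow_right (by omega) hky
    have h' : fS x - 1 + 1 = fS x := by omega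
    have e5 : (fS x - 1) * B ^ k x + B ^ k x = fS x * B ^ k x := by
      calc (fS x - 1) * B ^ k x + B ^ k x = (fS x - 1 + 1) * B ^ k x := by ring
        _ = fS x * B ^ k x := by rw [h']
    calc fT y * B ^ k y + fT x * B ^ k x
        ≤ n * B ^ k y + (fS x - 1) * B ^ k x := Nat.add_le_add e2 e1
      _ < B ^ k x + (fS x - 1) * B ^ k x :=
          Nat.add_lt_add_right (lt_of_lt_of_le e3 e4) _
      _ = fS x * B ^ k x := by rw [Nat.add_comm, e5]
      _ ≤ fS y * B ^ k y + fS x * B ^ k x := Nat.le_add_left _ _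
  omega
end Measure

/-- Theorem `thm:termination`.  The flip rewriting on the constructions
of an ordered connected hypergraph is terminating: there is no infinite sequence of
flips `S₀ → S₁ → S₂ → ⋯`. -/
theorem stmt9 {α : Type*} [LinearOrder α] (H : HGraph α) (hH : H.Connected) :
    ¬ ∃ f : ℕ → FTree α,
      (∀ n : ℕ, IsConstruction H (f n)) ∧ ∀ n : ℕ, Flip H (f n) (f (n + 1)) := by
  rintro ⟨f, hconstr, hflip⟩
  have hdec : ∀ n, measFn H (f (n + 1)) < measFn H (f n) := fun n => flip_measFn_lt (hflip n)
  have hle : ∀ n, measFn H (f n) + n ≤ measFn H (f 0) := by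
    intro n
    induction n with
    | zero => omega
    | succ n ih => have := hdec n; omega
  have := hle (measFn H (f 0) + 1)
  omega

end
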